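/- Let X be a normed space and S a λ-equilateral subset of X (i.e., ‖x - y‖ = λ for all distinct x, y ∈ S), and let M = sup{‖x‖ : x ∈ S} < ∞. Then S is a (M, 1, λ)-bounded and separated antipodal set: for every x ≠ y in S there exists f ∈ X* with ‖f‖ ≤ 1, f(y) - f(x) ≥ λ, and f(x) ≤ f(z) ≤ f(y) for all z ∈ S. -/

import Mathlib

open Set Filter

noncomputable section

/-- `S` is a `(c₁, c₂, d)`-bounded and separated antipodal subset of `X`. -/
def IsBSA (X : Type*) [NormedAddCommGroup X] [NormedSpace ℝ X] (S : Set X)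
    (c₁ c₂ d : ℝ) : Prop :=
  (∀ x ∈ S, ‖x‖ ≤ c₁) ∧
  ∀ x ∈ S, ∀ y ∈ S, x ≠ y → ∃ f : X →L[ℝ] ℝ, ‖f‖ ≤ c₂ ∧ d ≤ f y - f x ∧
    ∀ z ∈ S, f x ≤ f z ∧ f z ≤ f y

/-- The antipodal Kottman constant `K_a(X)`. -/
def Ka (X : Type*) [NormedAddCommGroup X] [NormedSpace ℝ X] : ℝ :=
  sSup {d : ℝ | ∃ S : Set X, S.Infinite ∧ IsBSA X S 1 1 d}

/-- The Kottman (separation) constant `K(X)`. -/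
def Kc (X : Type*) [NormedAddCommGroup X] : ℝ :=
  sSup {d : ℝ | ∃ S : Set X, S ⊆ Metric.closedBall 0 1 ∧ S.Infinite ∧
    ∀ x ∈ S, ∀ y ∈ S, x ≠ y → d ≤ ‖x - y‖}

/-- A bounded λ-equilateral set is an (M, 1, λ)-b.s.a. set, where
M = sup{‖x‖ : x ∈ S}. -/
theorem stmt2 {X : Type*} [NormedAddCommGroup X] [NormedSpace ℝ X]
    (S : Set X) (lam M : ℝ)
    (hequi : ∀ x ∈ S, ∀ y ∈ S, x ≠ y → ‖x - y‖ = lam)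
    (hM : IsLUB ((fun x : X => ‖x‖) '' S) M) :
    IsBSA X S M 1 lam := by
  constructor
  · intro x hx
    exact hM.1 ⟨x, hx, rfl⟩
  · intro x hx y hy hxy
    have hne : y - x ≠ 0 := sub_ne_zero.mpr (Ne.symm hxy)
    obtain ⟨f, hf1, hfx⟩ := exists_dual_vector ℝ (y - x) (norm_ne_zero_iff.mpr hne)
    have hlam : ‖y - x‖ = lam := hequi y hy x hx (Ne.symm hxy)
    refine ⟨f, le_of_eq hf1, ?_, ?_⟩
    · have : f (y - x) = lam := by rw [hfx]; exact_mod_cast hlam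
      simp only [map_sub] at this
      linarith [this]
    · intro z hz
      have hfyx : f y - f x = lam := by
        have : f (y - x) = lam := by rw [hfx]; exact_mod_cast hlam
        simpa [map_sub] using this
      have hlamnn : 0 ≤ lam := (hequi y hy x hx (Ne.symm hxy)) ▸ norm_nonneg _
      rcases eq_or_ne z x with rfl | hzx
      · exact ⟨le_refl _, by linarith⟩
      · rcases eq_or_ne z y with rfl | hzy
        · exact ⟨by linarith, le_refl _⟩
        · have h1 : f z - f x ≤ lam := by
            have := f.le_opNorm (z - x)
            rw [hf1, one_mul, hequi z hz x hx hzx] at this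
            calc f z - f x = f (z - x) := by rw [map_sub]
            _ ≤ ‖f (z - x)‖ := le_abs_self _
            _ ≤ lam := this
          have h2 : f y - f z ≤ lam := by
            have := f.le_opNorm (y - z)
            rw [hf1, one_mul, hequi y hy z hz (Ne.symm hzy)] at this
            calc f y - f z = f (y - z) := by rw [map_sub]
            _ ≤ ‖f (y - z)‖ := le_abs_self _
            _ ≤ lam := this
          constructor <;> linarith
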